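/- The abelianization of SL_2(ℤ) is cyclic of order 12, and the action of the matrix s = diag(-1,1) by conjugation on H_1(SL_2(ℤ);ℤ) ≅ ℤ/12ℤ is by negation; consequently the coinvariants H_1(SL_2(ℤ);ℤ)_{⟨s⟩} form a group of order 2 generated by the class of the matrix t = [[1,1],[0,1]]. -/

import Mathlib

open Matrix MatrixGroups ModularGroup Subgroup

/-- `SL_2(ℤ)`. -/
abbrev SL2Z := Matrix.SpecialLinearGroup (Fin 2) ℤ

/-- The matrix `diag(-1, 1)`. -/
def sMat : Matrix (Fin 2) (Fin 2) ℤ := !![-1, 0; 0, 1]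

/-- Conjugation by `s = diag(-1,1)` on `SL_2(ℤ)` (note `s⁻¹ = s`). -/
def sConj (A : SL2Z) : SL2Z :=
  ⟨sMat * A.val * sMat, by
    have hs : sMat.det = -1 := by simp [sMat, Matrix.det_fin_two_of]
    have hA : A.val.det = 1 := A.prop
    rw [Matrix.det_mul, Matrix.det_mul, hs, hA]; ring⟩

/-- The matrix `t = [[1,1],[0,1]]` in `SL_2(ℤ)`. -/
def tSL : SL2Z := ⟨!![1, 1; 0, 1], by simp [Matrix.det_fin_two_of]⟩

lemma natAbs_emod_lt' (a c : ℤ) (hc : c ≠ 0) : (a % c).natAbs < c.natAbs := by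
  have h1 : 0 ≤ a % c := Int.emod_nonneg a hc
  have h2 : a % c < |c| := by have := Int.emod_lt a hc; rwa [Int.abs_eq_natAbs]
  rw [Int.abs_eq_natAbs] at h2
  omega

lemma mem_closure_ST (A : SL2Z) : A ∈ Subgroup.closure ({S, T} : Set SL2Z) := by
  set H := Subgroup.closure ({S, T} : Set SL2Z) with hH
  have hS : S ∈ H := subset_closure (by simp)
  have hT : T ∈ H := subset_closure (by simp)
  have hS2 : (S * S : SL2Z).1 = -1 := ModularGroup.S_mul_S_eq
  generalize hn : (A.1 1 0).natAbs = n
  induction n using Nat.strong_induction_on generalizing A with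
  | _ n ih =>
    by_cases hc : A.1 1 0 = 0
    · -- c = 0 case
      have hdet : A.1 0 0 * A.1 1 1 = 1 := by
        have := A.2
        rw [Matrix.det_fin_two] at this
        rw [hc] at this; omega
      rcases (Int.mul_eq_one_iff_eq_one_or_neg_one.1 hdet) with ⟨h1, h2⟩ | ⟨h1, h2⟩
      · have : A = T ^ (A.1 0 1) := by
          apply Subtype.ext
          rw [coe_T_zpow]
          conv_lhs => rw [Matrix.eta_fin_two A.1, h1, h2, hc]
        rw [this]; exact H.zpow_mem hT _
      · have : A = (S * S) * T ^ (-A.1 0 1) := by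
          apply Subtype.ext
          rw [Matrix.SpecialLinearGroup.coe_mul, hS2, coe_T_zpow]
          conv_lhs => rw [Matrix.eta_fin_two A.1, h1, h2, hc]
          rw [neg_one_mul]
          ext i j
          fin_cases i <;> fin_cases j <;> simp
        rw [this]
        exact H.mul_mem (H.mul_mem hS hS) (H.zpow_mem hT _)
    · -- c ≠ 0
      set B : SL2Z := S * (T ^ (-(A.1 0 0 / A.1 1 0)) * A) with hB
      have hB10 : B.1 1 0 = A.1 0 0 % A.1 1 0 := by
        show ((S * (T ^ (-(A.1 0 0 / A.1 1 0)) * A)).1) 1 0 = _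
        rw [Matrix.SpecialLinearGroup.coe_mul, Matrix.SpecialLinearGroup.coe_mul, coe_S, coe_T_zpow]
        simp [Matrix.mul_apply, Fin.sum_univ_succ, Matrix.vecMul, Matrix.vecHead,
          Matrix.vecTail, dotProduct]
        rw [Int.emod_def]; ring
      have hlt : (B.1 1 0).natAbs < n := by
        rw [hB10, ← hn]
        exact natAbs_emod_lt' _ _ hc
      have hBmem : B ∈ H := ih _ hlt B rfl
      have : A = T ^ (A.1 0 0 / A.1 1 0) * (S⁻¹ * B) := by
        rw [hB]; group
      rw [this]
      exact H.mul_mem (H.zpow_mem hT _) (H.mul_mem (H.inv_mem hS) hBmem)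

lemma closure_ST : Subgroup.closure ({S, T} : Set SL2Z) = ⊤ :=
  Subgroup.eq_top_iff' _ |>.2 mem_closure_ST

lemma S_pow_four : (S : SL2Z) ^ 4 = 1 := by
  have h : (S * S : SL2Z).1 = -1 := ModularGroup.S_mul_S_eq
  have : (S:SL2Z)^4 = (S*S) * (S*S) := by rw [pow_succ, pow_succ, pow_two]; group
  rw [this]
  apply Subtype.ext
  rw [Matrix.SpecialLinearGroup.coe_mul, h]
  simp

lemma S_sq_eq_ST_cube : (S : SL2Z) ^ 2 = (S * T) ^ 3 := by
  apply Subtype.ext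
  show ((S:SL2Z)^2).1 = ((S*T:SL2Z)^3).1
  rw [pow_two, pow_succ, pow_two]
  simp only [Matrix.SpecialLinearGroup.coe_mul, coe_S, coe_T]
  ext i j
  fin_cases i <;> fin_cases j <;>
    simp [Matrix.mul_apply, Fin.sum_univ_succ]

lemma of_S_eq : Abelianization.of (S : SL2Z) = ((Abelianization.of (T : SL2Z)) ^ 3)⁻¹ := by
  set s := Abelianization.of (S : SL2Z) with hs
  set t := Abelianization.of (T : SL2Z) with ht
  have h23 : s ^ 2 = (s * t) ^ 3 := by
    rw [hs, ht, ← _root_.map_mul, ← _root_.map_pow, ← _root_.map_pow, S_sq_eq_ST_cube]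
  have key : s * t ^ 3 = 1 := by
    have h : s ^ 2 * (s * t ^ 3) = s ^ 2 := by
      conv_rhs => rw [h23, mul_pow]
      rw [← mul_assoc, ← pow_succ]
    exact (left_eq_mul.mp h.symm)
  rw [eq_inv_iff_mul_eq_one]
  exact key

lemma of_T_pow_twelve : (Abelianization.of (T : SL2Z)) ^ 12 = 1 := by
  have h : (((Abelianization.of (T : SL2Z)) ^ 3)⁻¹) ^ 4 = 1 := by
    rw [← of_S_eq, ← _root_.map_pow, S_pow_four, _root_.map_one]
  calc (Abelianization.of (T : SL2Z)) ^ 12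
      = ((((Abelianization.of (T : SL2Z)) ^ 3)⁻¹) ^ 4)⁻¹ := by group
    _ = 1⁻¹ := by rw [h]
    _ = 1 := inv_one

lemma of_surjective : Function.Surjective (Abelianization.of (G := SL2Z)) :=
  fun x => Quotient.inductionOn' x fun A => ⟨A, rfl⟩

lemma mem_zpowers_of_T (x : Abelianization SL2Z) :
    x ∈ Subgroup.zpowers (Abelianization.of (T : SL2Z)) := by
  obtain ⟨A, rfl⟩ := of_surjective x
  have hA := mem_closure_ST A
  induction hA using Subgroup.closure_induction with
  | mem g hg =>
    rcases hg with h | h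
    · subst h; rw [of_S_eq]
      exact Subgroup.inv_mem _ (Subgroup.zpow_mem _ (Subgroup.mem_zpowers _) 3)
    · simp at h; subst h; exact Subgroup.mem_zpowers _
  | one => rw [_root_.map_one]; exact Subgroup.one_mem _
  | mul g h _ _ ihg ihh => rw [_root_.map_mul]; exact Subgroup.mul_mem _ ihg ihh
  | inv g _ ihg => rw [_root_.map_inv]; exact Subgroup.inv_mem _ ihg

def tbl4 (a b c d : ZMod 4) : ZMod 4 :=
  if a = 0 ∧ b = 1 ∧ c = 3 ∧ d = 0 then 3 else
  if a = 0 ∧ b = 1 ∧ c = 3 ∧ d = 1 then 2 else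
  if a = 0 ∧ b = 1 ∧ c = 3 ∧ d = 2 then 1 else
  if a = 0 ∧ b = 1 ∧ c = 3 ∧ d = 3 then 0 else
  if a = 0 ∧ b = 3 ∧ c = 1 ∧ d = 0 then 1 else
  if a = 0 ∧ b = 3 ∧ c = 1 ∧ d = 1 then 2 else
  if a = 0 ∧ b = 3 ∧ c = 1 ∧ d = 2 then 3 else
  if a = 0 ∧ b = 3 ∧ c = 1 ∧ d = 3 then 0 else
  if a = 1 ∧ b = 0 ∧ c = 0 ∧ d = 1 then 0 else
  if a = 1 ∧ b = 0 ∧ c = 1 ∧ d = 1 then 3 else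
  if a = 1 ∧ b = 0 ∧ c = 2 ∧ d = 1 then 2 else
  if a = 1 ∧ b = 0 ∧ c = 3 ∧ d = 1 then 1 else
  if a = 1 ∧ b = 1 ∧ c = 0 ∧ d = 1 then 1 else
  if a = 1 ∧ b = 1 ∧ c = 1 ∧ d = 2 then 0 else
  if a = 1 ∧ b = 1 ∧ c = 2 ∧ d = 3 then 3 else
  if a = 1 ∧ b = 1 ∧ c = 3 ∧ d = 0 then 2 else
  if a = 1 ∧ b = 2 ∧ c = 0 ∧ d = 1 then 2 else
  if a = 1 ∧ b = 2 ∧ c = 1 ∧ d = 3 then 1 else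
  if a = 1 ∧ b = 2 ∧ c = 2 ∧ d = 1 then 0 else
  if a = 1 ∧ b = 2 ∧ c = 3 ∧ d = 3 then 3 else
  if a = 1 ∧ b = 3 ∧ c = 0 ∧ d = 1 then 3 else
  if a = 1 ∧ b = 3 ∧ c = 1 ∧ d = 0 then 2 else
  if a = 1 ∧ b = 3 ∧ c = 2 ∧ d = 3 then 1 else
  if a = 1 ∧ b = 3 ∧ c = 3 ∧ d = 2 then 0 else
  if a = 2 ∧ b = 1 ∧ c = 1 ∧ d = 1 then 0 else
  if a = 2 ∧ b = 1 ∧ c = 1 ∧ d = 3 then 2 else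
  if a = 2 ∧ b = 1 ∧ c = 3 ∧ d = 0 then 1 else
  if a = 2 ∧ b = 1 ∧ c = 3 ∧ d = 2 then 3 else
  if a = 2 ∧ b = 3 ∧ c = 1 ∧ d = 0 then 3 else
  if a = 2 ∧ b = 3 ∧ c = 1 ∧ d = 2 then 1 else
  if a = 2 ∧ b = 3 ∧ c = 3 ∧ d = 1 then 0 else
  if a = 2 ∧ b = 3 ∧ c = 3 ∧ d = 3 then 2 else
  if a = 3 ∧ b = 0 ∧ c = 0 ∧ d = 3 then 2 else
  if a = 3 ∧ b = 0 ∧ c = 1 ∧ d = 3 then 3 else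
  if a = 3 ∧ b = 0 ∧ c = 2 ∧ d = 3 then 0 else
  if a = 3 ∧ b = 0 ∧ c = 3 ∧ d = 3 then 1 else
  if a = 3 ∧ b = 1 ∧ c = 0 ∧ d = 3 then 1 else
  if a = 3 ∧ b = 1 ∧ c = 1 ∧ d = 2 then 2 else
  if a = 3 ∧ b = 1 ∧ c = 2 ∧ d = 1 then 3 else
  if a = 3 ∧ b = 1 ∧ c = 3 ∧ d = 0 then 0 else
  if a = 3 ∧ b = 2 ∧ c = 0 ∧ d = 3 then 0 else
  if a = 3 ∧ b = 2 ∧ c = 1 ∧ d = 1 then 1 else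
  if a = 3 ∧ b = 2 ∧ c = 2 ∧ d = 3 then 2 else
  if a = 3 ∧ b = 2 ∧ c = 3 ∧ d = 1 then 3 else
  if a = 3 ∧ b = 3 ∧ c = 0 ∧ d = 3 then 3 else
  if a = 3 ∧ b = 3 ∧ c = 1 ∧ d = 0 then 0 else
  if a = 3 ∧ b = 3 ∧ c = 2 ∧ d = 1 then 1 else
  2

def f4 (A : Matrix.SpecialLinearGroup (Fin 2) (ZMod 4)) : ZMod 4 :=
  tbl4 (A.1 0 0) (A.1 0 1) (A.1 1 0) (A.1 1 1)

def f3 (A : Matrix.SpecialLinearGroup (Fin 2) (ZMod 3)) : ZMod 3 :=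
  A.1 1 0 * A.1 1 1 + A.1 0 1 * A.1 1 1 + 2 * A.1 0 1 * (A.1 1 0)^2 * A.1 1 1
    + A.1 0 0 * A.1 1 0

set_option maxRecDepth 100000 in
lemma f3_hom : ∀ A B : Matrix.SpecialLinearGroup (Fin 2) (ZMod 3),
    f3 (A * B) = f3 A + f3 B := by decide

set_option maxRecDepth 100000 in
set_option maxHeartbeats 2000000 in
lemma f4_hom : ∀ A B : Matrix.SpecialLinearGroup (Fin 2) (ZMod 4),
    f4 (A * B) = f4 A + f4 B := by decide

def f3M : Matrix.SpecialLinearGroup (Fin 2) (ZMod 3) →* Multiplicative (ZMod 3) :=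
  { toFun := fun A => Multiplicative.ofAdd (f3 A), map_one' := by decide,
    map_mul' := fun A B => by simp only [← ofAdd_add, f3_hom] }

def f4M : Matrix.SpecialLinearGroup (Fin 2) (ZMod 4) →* Multiplicative (ZMod 4) :=
  { toFun := fun A => Multiplicative.ofAdd (f4 A), map_one' := by decide,
    map_mul' := fun A B => by simp only [← ofAdd_add, f4_hom] }

def φ3 : SL2Z →* Multiplicative (ZMod 3) :=
  f3M.comp (Matrix.SpecialLinearGroup.map (Int.castRingHom (ZMod 3)))

def φ4 : SL2Z →* Multiplicative (ZMod 4) :=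
  f4M.comp (Matrix.SpecialLinearGroup.map (Int.castRingHom (ZMod 4)))

def φ : SL2Z →* Multiplicative (ZMod 3) × Multiplicative (ZMod 4) := φ3.prod φ4

lemma φ_T : φ (T : SL2Z) = (Multiplicative.ofAdd (1 : ZMod 3),
    Multiplicative.ofAdd (1 : ZMod 4)) := by
  have h3 : Matrix.SpecialLinearGroup.map (Int.castRingHom (ZMod 3)) (T : SL2Z)
      = ⟨!![1, 1; 0, 1], by decide⟩ := by
    apply Subtype.ext
    ext i j
    fin_cases i <;> fin_cases j <;> rfl
  have h4 : Matrix.SpecialLinearGroup.map (Int.castRingHom (ZMod 4)) (T : SL2Z)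
      = ⟨!![1, 1; 0, 1], by decide⟩ := by
    apply Subtype.ext
    ext i j
    fin_cases i <;> fin_cases j <;> rfl
  show (φ3 T, φ4 T) = _
  show (f3M (Matrix.SpecialLinearGroup.map (Int.castRingHom (ZMod 3)) T),
    f4M (Matrix.SpecialLinearGroup.map (Int.castRingHom (ZMod 4)) T)) = _
  rw [h3, h4]
  rfl

lemma orderOf_of_T : orderOf (Abelianization.of (T : SL2Z)) = 12 := by
  have hdvd : orderOf (Abelianization.of (T : SL2Z)) ∣ 12 :=
    orderOf_dvd_of_pow_eq_one of_T_pow_twelve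
  have hpow : ((Multiplicative.ofAdd (1 : ZMod 3), Multiplicative.ofAdd (1 : ZMod 4))
      : Multiplicative (ZMod 3) × Multiplicative (ZMod 4))
        ^ (orderOf (Abelianization.of (T : SL2Z))) = 1 := by
    rw [← φ_T, ← Abelianization.lift_apply_of (f := φ) T, ← map_pow, pow_orderOf_eq_one, _root_.map_one]
  generalize hd : orderOf (Abelianization.of (T : SL2Z)) = d at hdvd hpow ⊢
  have hmem : d ∈ Nat.divisors 12 := Nat.mem_divisors.2 ⟨hdvd, by norm_num⟩
  fin_cases hmem <;> first | rfl | (exfalso; revert hpow; decide)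

lemma zpowers_of_T_top : Subgroup.zpowers (Abelianization.of (T : SL2Z)) = ⊤ :=
  (Subgroup.eq_top_iff' _).2 mem_zpowers_of_T

lemma card_ab : Nat.card (Abelianization SL2Z) = 12 := by
  rw [← Subgroup.card_top, ← zpowers_of_T_top, Nat.card_zpowers, orderOf_of_T]

/-- `sMat` is an involution. -/
lemma sMat_mul_sMat : sMat * sMat = 1 := by
  ext i j
  fin_cases i <;> fin_cases j <;>
    simp [sMat, Matrix.mul_apply, Fin.sum_univ_succ]

lemma sMat_mul_sMat_mul (X : Matrix (Fin 2) (Fin 2) ℤ) : sMat * (sMat * X) = X := by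
  rw [← Matrix.mul_assoc, sMat_mul_sMat, Matrix.one_mul]

/-- Conjugation by `sMat` as a group homomorphism. -/
def sConjHom : SL2Z →* SL2Z where
  toFun := sConj
  map_one' := by
    apply Subtype.ext
    show sMat * (1 : SL2Z).1 * sMat = (1 : SL2Z).1
    rw [Matrix.SpecialLinearGroup.coe_one, Matrix.mul_one, sMat_mul_sMat]
  map_mul' A B := by
    apply Subtype.ext
    show sMat * (A * B).1 * sMat = (sMat * A.1 * sMat) * (sMat * B.1 * sMat)
    rw [Matrix.SpecialLinearGroup.coe_mul]
    simp only [Matrix.mul_assoc, sMat_mul_sMat_mul]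

lemma sConj_S : sConj S = S⁻¹ := by
  apply eq_inv_of_mul_eq_one_left
  apply Subtype.ext
  show (sMat * (S : SL2Z).1 * sMat) * (S : SL2Z).1 = (1 : SL2Z).1
  rw [coe_S, Matrix.SpecialLinearGroup.coe_one]
  ext i j
  fin_cases i <;> fin_cases j <;>
    simp [sMat, Matrix.mul_apply, Fin.sum_univ_succ]

lemma sConj_T : sConj T = T⁻¹ := by
  apply eq_inv_of_mul_eq_one_left
  apply Subtype.ext
  show (sMat * (T : SL2Z).1 * sMat) * (T : SL2Z).1 = (1 : SL2Z).1
  rw [coe_T, Matrix.SpecialLinearGroup.coe_one]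
  ext i j
  fin_cases i <;> fin_cases j <;>
    simp [sMat, Matrix.mul_apply, Fin.sum_univ_succ]

lemma of_sConj (A : SL2Z) :
    Abelianization.of (sConj A) = (Abelianization.of A)⁻¹ := by
  set ψ : SL2Z →* Abelianization SL2Z :=
    ((Abelianization.of (G := SL2Z)).comp sConjHom) * (Abelianization.of (G := SL2Z)) with hψ
  have hSK : S ∈ ψ.ker := by
    show Abelianization.of (sConj S) * Abelianization.of S = 1
    rw [sConj_S, map_inv, inv_mul_cancel]
  have hTK : T ∈ ψ.ker := by
    show Abelianization.of (sConj T) * Abelianization.of T = 1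
    rw [sConj_T, map_inv, inv_mul_cancel]
  have htop : (⊤ : Subgroup SL2Z) ≤ ψ.ker := by
    rw [← closure_ST]
    apply (Subgroup.closure_le _).2
    intro x hx
    rcases hx with h | h
    · subst h; exact hSK
    · simp at h; subst h; exact hTK
  have : ψ A = 1 := htop (Subgroup.mem_top A)
  have h1 : Abelianization.of (sConj A) * Abelianization.of A = 1 := this
  exact eq_inv_of_mul_eq_one_left h1

lemma tSL_eq_T : tSL = T := Subtype.ext rfl

theorem stmt_5' :
    (IsCyclic (Abelianization SL2Z) ∧ Nat.card (Abelianization SL2Z) = 12) ∧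
    (∀ A : SL2Z, Abelianization.of (sConj A) = (Abelianization.of A)⁻¹) ∧
    (Nat.card
        (Abelianization SL2Z ⧸
          Subgroup.closure
            {x | ∃ A : SL2Z, x = Abelianization.of A * (Abelianization.of (sConj A))⁻¹}) = 2 ∧
      (QuotientGroup.mk' (Subgroup.closure
            {x | ∃ A : SL2Z, x = Abelianization.of A * (Abelianization.of (sConj A))⁻¹}))
          (Abelianization.of tSL) ≠ 1) := by
  have hfin : Finite (Abelianization SL2Z) :=
    Nat.finite_of_card_ne_zero (by rw [card_ab]; norm_num)
  set t := Abelianization.of (T : SL2Z) with ht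
  have hH : Subgroup.closure
      {x | ∃ A : SL2Z, x = Abelianization.of A * (Abelianization.of (sConj A))⁻¹}
      = Subgroup.zpowers (t ^ 2) := by
    apply le_antisymm
    · apply (Subgroup.closure_le _).2
      rintro x ⟨A, rfl⟩
      rw [of_sConj, inv_inv, ← pow_two]
      obtain ⟨k, hk⟩ := mem_zpowers_of_T (Abelianization.of A)
      exact ⟨k, by rw [← hk]; group; rfl⟩
    · rw [Subgroup.zpowers_le]
      apply Subgroup.subset_closure
      refine ⟨tSL, ?_⟩
      rw [of_sConj, inv_inv, ← pow_two, tSL_eq_T]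
  have hcardH : Nat.card (Subgroup.zpowers (t ^ 2)) = 6 := by
    rw [Nat.card_zpowers, orderOf_pow' t (two_ne_zero), orderOf_of_T]
    norm_num
  have hqcard : Nat.card
      (Abelianization SL2Z ⧸
        Subgroup.closure
          {x | ∃ A : SL2Z, x = Abelianization.of A * (Abelianization.of (sConj A))⁻¹}) = 2 := by
    have h := Subgroup.card_eq_card_quotient_mul_card_subgroup
      (Subgroup.closure
        {x | ∃ A : SL2Z, x = Abelianization.of A * (Abelianization.of (sConj A))⁻¹})
    rw [card_ab] at h
    rw [hH] at h ⊢
    rw [hcardH] at h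
    omega
  refine ⟨⟨⟨⟨t, mem_zpowers_of_T⟩⟩, card_ab⟩, of_sConj, hqcard, ?_⟩
  intro hcontra
  rw [QuotientGroup.mk'_apply, QuotientGroup.eq_one_iff, hH, tSL_eq_T, ← ht] at hcontra
  obtain ⟨k, hk⟩ := hcontra
  have h1 : t ^ (2 * k - 1) = 1 := by
    rw [_root_.zpow_sub, zpow_one, _root_.zpow_mul]
    rw [show (2 : ℤ) = ((2 : ℕ) : ℤ) from rfl, zpow_natCast]
    have hk' : (t ^ 2) ^ k = t := hk
    rw [hk']
    exact mul_inv_cancel t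
  have h2 : ((orderOf t : ℤ)) ∣ (2 * k - 1) := orderOf_dvd_iff_zpow_eq_one.2 h1
  rw [orderOf_of_T] at h2
  obtain ⟨m, hm⟩ := h2
  omega


/-- the abelianization of `SL_2(ℤ)` is cyclic of order 12, conjugation by
`s = diag(-1,1)` acts on it by negation (inversion, in multiplicative notation), and the
coinvariants of this action form a group of order 2 generated by the class of
`t = [[1,1],[0,1]]`. -/
theorem stmt_5 :
    (IsCyclic (Abelianization SL2Z) ∧ Nat.card (Abelianization SL2Z) = 12) ∧
    (∀ A : SL2Z, Abelianization.of (sConj A) = (Abelianization.of A)⁻¹) ∧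
    (Nat.card
        (Abelianization SL2Z ⧸
          Subgroup.closure
            {x | ∃ A : SL2Z, x = Abelianization.of A * (Abelianization.of (sConj A))⁻¹}) = 2 ∧
      (QuotientGroup.mk' (Subgroup.closure
            {x | ∃ A : SL2Z, x = Abelianization.of A * (Abelianization.of (sConj A))⁻¹}))
          (Abelianization.of tSL) ≠ 1) := by
  exact stmt_5'
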